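/- For every n ≥ 1, the n-th univariate Eulerian polynomial A_n is palindromic, i.e. E(n+1,k) = E(n+1,n-k) for all 0 ≤ k ≤ n, and A_n splits over the reals with all of its roots real and strictly negative. -/

import Mathlib

/-- Number of descents of a permutation of `Fin (n+1)` (positions `1,...,n` in 1-based terms). -/
def descents (n : ℕ) (σ : Equiv.Perm (Fin (n + 1))) : ℕ :=
  (Finset.univ.filter fun i : Fin n => σ i.succ < σ i.castSucc).card

/-- Eulerian number `E(n+1,k)`: number of permutations of `{1,...,n+1}` with exactly `k`
descents. -/
def eulerianNumber (n k : ℕ) : ℕ :=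
  (Finset.univ.filter fun σ : Equiv.Perm (Fin (n + 1)) => descents n σ = k).card

/-- The `n`-th univariate Eulerian polynomial `A_n(x) = Σ_{σ ∈ S_{n+1}} x^{des σ}`. -/
noncomputable def eulerianPoly (n : ℕ) : Polynomial ℝ :=
  ∑ σ : Equiv.Perm (Fin (n + 1)), Polynomial.X ^ descents n σ

open Polynomial Finset Equiv

lemma descents_le (n : ℕ) (σ : Equiv.Perm (Fin (n+1))) : descents n σ ≤ n := by
  classical
  calc descents n σ ≤ (Finset.univ : Finset (Fin n)).card := Finset.card_filter_le _ _
  _ = n := by simp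

lemma descents_rev (n : ℕ) (σ : Equiv.Perm (Fin (n+1))) :
    descents n (σ.trans Fin.revPerm) + descents n σ = n := by
  classical
  unfold descents
  have : ∀ i : Fin n, (σ.trans Fin.revPerm) i.succ < (σ.trans Fin.revPerm) i.castSucc
      ↔ ¬ (σ i.succ < σ i.castSucc) := by
    intro i
    have hne : σ i.castSucc ≠ σ i.succ := by
      intro h
      exact absurd (σ.injective h) (Fin.ne_of_lt (Fin.castSucc_lt_succ (i := i)))
    simp only [Equiv.trans_apply, Fin.revPerm_apply, Fin.rev_lt_rev]
    constructor
    · exact fun h => not_lt.2 h.le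
    · intro h; exact lt_of_le_of_ne (not_lt.1 h) hne
  rw [Finset.filter_congr (fun i _ => this i)]
  have := Finset.card_filter_add_card_filter_not (s := (Finset.univ : Finset (Fin n)))
    (fun i : Fin n => σ i.succ < σ i.castSucc)
  simp only [Finset.card_univ, Fintype.card_fin] at this
  omega

lemma eulerianNumber_symm (n : ℕ) (k : ℕ) (hk : k ≤ n) :
    eulerianNumber n k = eulerianNumber n (n - k) := by
  classical
  unfold eulerianNumber
  refine Finset.card_bij' (fun σ _ => σ.trans Fin.revPerm) (fun σ _ => σ.trans Fin.revPerm)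
    ?_ ?_ ?_ ?_
  · intro σ hσ
    simp only [Finset.mem_filter, Finset.mem_univ, true_and] at hσ ⊢
    have := descents_rev n σ
    omega
  · intro σ hσ
    simp only [Finset.mem_filter, Finset.mem_univ, true_and] at hσ ⊢
    have := descents_rev n σ
    omega
  · intro σ _
    ext i
    simp
  · intro σ _
    ext i
    simp

lemma coeff_eulerianPoly (n k : ℕ) :
    (eulerianPoly n).coeff k = (eulerianNumber n k : ℝ) := by
  classical
  unfold eulerianPoly eulerianNumber
  rw [Polynomial.finset_sum_coeff]
  simp only [Polynomial.coeff_X_pow]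
  rw [Finset.card_filter]
  push_cast
  refine Finset.sum_congr rfl fun σ _ => ?_
  by_cases h : descents n σ = k
  · simp [h]
  · simp only [h, if_false]
    rw [if_neg (fun hh => h hh.symm)]

lemma descents_revPerm (n : ℕ) : descents n (Fin.revPerm : Equiv.Perm (Fin (n+1))) = n := by
  classical
  unfold descents
  have : ∀ i : Fin n, (Fin.revPerm : Equiv.Perm (Fin (n+1))) i.succ < Fin.revPerm i.castSucc := by
    intro i
    simp only [Fin.revPerm_apply, Fin.rev_lt_rev]
    exact Fin.castSucc_lt_succ (i := i)
  rw [Finset.filter_true_of_mem fun i _ => this i]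
  simp

lemma eulerianNumber_self_pos (n : ℕ) : 0 < eulerianNumber n n := by
  classical
  unfold eulerianNumber
  rw [Finset.card_pos]
  exact ⟨Fin.revPerm, by simp [descents_revPerm]⟩

lemma eulerianPoly_natDegree (n : ℕ) : (eulerianPoly n).natDegree = n := by
  classical
  have h1 : (eulerianPoly n).natDegree ≤ n := by
    unfold eulerianPoly
    refine Polynomial.natDegree_sum_le_of_forall_le _ _ fun σ _ => ?_
    simpa using descents_le n σ
  have h2 : n ≤ (eulerianPoly n).natDegree := by
    refine Polynomial.le_natDegree_of_ne_zero ?_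
    rw [coeff_eulerianPoly]
    have := eulerianNumber_self_pos n
    positivity
  omega

lemma eulerianPoly_ne_zero (n : ℕ) : eulerianPoly n ≠ 0 := by
  intro h
  have := coeff_eulerianPoly n n
  rw [h] at this
  simp only [Polynomial.coeff_zero] at this
  have := eulerianNumber_self_pos n
  have h2 : ((eulerianNumber n n : ℝ)) > 0 := by positivity
  linarith

variable {n : ℕ}

/-- insert the max at slot j -/
def ins (j : Fin (n+2)) (τ : Equiv.Perm (Fin (n+1))) : Equiv.Perm (Fin (n+2)) :=
  ((finSuccEquiv' j).trans (Equiv.optionCongr τ)).trans (finSuccEquiv' (Fin.last (n+1))).symm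

lemma ins_self (j : Fin (n+2)) (τ : Equiv.Perm (Fin (n+1))) :
    ins j τ j = Fin.last (n+1) := by
  simp [ins, finSuccEquiv'_at, finSuccEquiv'_symm_none]

lemma ins_succAbove (j : Fin (n+2)) (τ : Equiv.Perm (Fin (n+1))) (i : Fin (n+1)) :
    ins j τ (j.succAbove i) = (τ i).castSucc := by
  simp only [ins, Equiv.trans_apply, finSuccEquiv'_succAbove, Equiv.optionCongr_apply,
    Option.map_some, finSuccEquiv'_symm_some]
  rw [Fin.succAbove_last]

lemma ins_bijective : Function.Bijective
    (fun p : Fin (n+2) × Equiv.Perm (Fin (n+1)) => ins p.1 p.2) := by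
  classical
  rw [Fintype.bijective_iff_injective_and_card]
  constructor
  · rintro ⟨j, τ⟩ ⟨j', τ'⟩ h
    simp only at h
    have hj : j = j' := by
      have h1 : ins j τ j = Fin.last (n+1) := ins_self j τ
      have h2 : ins j' τ' j' = Fin.last (n+1) := ins_self j' τ'
      rw [h] at h1
      have := (ins j' τ').injective (h1.trans h2.symm)
      exact this
    subst hj
    have hτ : τ = τ' := by
      ext i
      have h1 := ins_succAbove j τ i
      have h2 := ins_succAbove j τ' i
      rw [h] at h1
      exact congrArg Fin.val (Fin.castSucc_injective _ (h1.symm.trans h2))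
    rw [hτ]
  · simp [Fintype.card_perm, Nat.factorial_succ]

lemma descents_card_filter (N : ℕ) (σ : Equiv.Perm (Fin (N+1))) :
    descents N σ = ∑ i : Fin N, (if σ i.succ < σ i.castSucc then 1 else 0) := by
  classical
  rw [descents, Finset.card_filter]

lemma descents_ins_last (τ : Equiv.Perm (Fin (n+1))) :
    descents (n+1) (ins (Fin.last (n+1)) τ) = descents n τ := by
  classical
  rw [descents_card_filter, descents_card_filter]
  rw [Fin.sum_univ_castSucc]
  have hlast : ∀ x : Fin (n+1), ins (Fin.last (n+1)) τ x.castSucc = (τ x).castSucc := by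
    intro x
    have : (Fin.last (n+1)).succAbove x = x.castSucc := by rw [Fin.succAbove_last]
    rw [← this, ins_succAbove]
  have h2 : (if ins (Fin.last (n+1)) τ (Fin.last n).succ <
      ins (Fin.last (n+1)) τ (Fin.last n).castSucc then 1 else 0) = 0 := by
    rw [if_neg]
    rw [Fin.succ_last, ins_self]
    exact not_lt.2 (Fin.le_last _)
  rw [h2, add_zero]
  refine Finset.sum_congr rfl fun k _ => ?_
  have e1 : (k.castSucc : Fin (n+1)).succ = k.succ.castSucc := Fin.succ_castSucc k
  rw [e1, hlast, hlast]
  simp [Fin.castSucc_lt_castSucc_iff]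

lemma descents_ins_castSucc (m : Fin (n+1)) (τ : Equiv.Perm (Fin (n+1))) :
    descents (n+1) (ins m.castSucc τ)
      = 1 + ∑ k : Fin n, (if k.succ = m then 0 else
          if τ k.succ < τ k.castSucc then 1 else 0) := by
  classical
  set j : Fin (n+2) := m.castSucc with hj
  set σ := ins j τ with hσ
  rw [descents_card_filter]
  rw [Fin.sum_univ_succAbove _ m]
  congr 1
  · -- term at i = m
    have h1 : σ (Fin.castSucc m) = Fin.last (n+1) := by rw [hσ, hj]; exact ins_self _ _
    have h2 : σ m.succ = (τ m).castSucc := by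
      have : j.succAbove m = m.succ :=
        Fin.succAbove_of_le_castSucc _ _ (le_refl _)
      rw [← this, hσ]; exact ins_succAbove _ _ _
    rw [h1, h2, if_pos (Fin.castSucc_lt_last _)]
  · refine Finset.sum_congr rfl fun k _ => ?_
    by_cases hk : k.castSucc < m
    · -- i = k.castSucc
      have hi : m.succAbove k = k.castSucc := Fin.succAbove_of_castSucc_lt _ _ hk
      have hcs : σ (Fin.castSucc (Fin.castSucc k)) = (τ k.castSucc).castSucc := by
        have : j.succAbove k.castSucc = (Fin.castSucc (Fin.castSucc k)) :=
          Fin.succAbove_of_castSucc_lt _ _ (by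
            rw [hj, Fin.castSucc_lt_castSucc_iff]; exact hk)
        rw [← this, hσ]; exact ins_succAbove _ _ _
      by_cases hk2 : k.succ = m
      · have hsucc : (Fin.castSucc k).succ = j := by
          rw [Fin.succ_castSucc, hj, hk2]
        rw [hi, if_pos hk2, hsucc, hcs]
        have : σ j = Fin.last (n+1) := by rw [hσ]; exact ins_self _ _
        rw [this, if_neg (by exact not_lt.2 (Fin.le_last _))]
      · have hlt : k.succ < m := by
          have h1 : (k : ℕ) < (m : ℕ) := hk
          have h2 : (k.succ : ℕ) ≠ (m : ℕ) := fun h => hk2 (Fin.val_injective h)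
          rw [Fin.lt_def]
          simp only [Fin.val_succ] at h2 ⊢
          omega
        have hs : σ ((Fin.castSucc k).succ) = (τ k.succ).castSucc := by
          have : j.succAbove k.succ = (Fin.castSucc k).succ := by
            rw [Fin.succ_castSucc]
            exact Fin.succAbove_of_castSucc_lt _ _ (by
              rw [hj, Fin.castSucc_lt_castSucc_iff]; exact hlt)
          rw [← this, hσ]; exact ins_succAbove _ _ _
        rw [hi, if_neg hk2, hs, hcs]
        simp [Fin.castSucc_lt_castSucc_iff]
    · -- i = k.succ
      push_neg at hk
      have hi : m.succAbove k = k.succ := Fin.succAbove_of_le_castSucc _ _ hk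
      have hcs : σ (Fin.castSucc k.succ) = (τ k.castSucc).castSucc := by
        have : j.succAbove k.castSucc = Fin.castSucc k.succ := by
          rw [← Fin.succ_castSucc]
          exact Fin.succAbove_of_le_castSucc _ _ (by
            rw [hj, Fin.castSucc_le_castSucc_iff]; exact hk)
        rw [← this, hσ]; exact ins_succAbove _ _ _
      have hs : σ (k.succ.succ) = (τ k.succ).castSucc := by
        have : j.succAbove k.succ = k.succ.succ := by
          exact Fin.succAbove_of_le_castSucc _ _ (by
            rw [hj, Fin.castSucc_le_castSucc_iff]
            exact le_trans hk (le_of_lt (Fin.castSucc_lt_succ (i := k))))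
        rw [← this, hσ]; exact ins_succAbove _ _ _
      have hk2 : ¬ (k.succ = m) := by
        intro h
        rw [← h] at hk
        exact absurd hk (not_le.2 (Fin.castSucc_lt_succ (i := k)))
      rw [hi, if_neg hk2, hs, hcs]
      simp [Fin.castSucc_lt_castSucc_iff]

lemma sum_ins (τ : Equiv.Perm (Fin (n+1))) :
    ∑ j : Fin (n+2), (X : Polynomial ℝ) ^ (descents (n+1) (ins j τ))
      = (descents n τ + 1) • (X : Polynomial ℝ) ^ (descents n τ)
        + (n + 1 - descents n τ) • (X : Polynomial ℝ) ^ (descents n τ + 1) := by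
  classical
  set d := descents n τ with hd
  rw [Fin.sum_univ_castSucc]
  rw [descents_ins_last]
  have hterm : ∀ m : Fin (n+1),
      (X : Polynomial ℝ) ^ (descents (n+1) (ins m.castSucc τ))
        = X ^ (1 + ∑ k : Fin n, (if k.succ = m then 0 else
            if τ k.succ < τ k.castSucc then 1 else 0)) := by
    intro m; rw [descents_ins_castSucc]
  rw [Finset.sum_congr rfl fun m _ => hterm m]
  rw [Fin.sum_univ_succ]
  have h0 : (1 + ∑ k : Fin n, (if k.succ = (0 : Fin (n+1)) then 0 else
      if τ k.succ < τ k.castSucc then 1 else 0)) = 1 + d := by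
    congr 1
    rw [hd, descents_card_filter]
    exact Finset.sum_congr rfl fun k _ => by rw [if_neg (Fin.succ_ne_zero k)]
  rw [h0]
  have hsum : ∀ k0 : Fin n,
      (X : Polynomial ℝ) ^ (1 + ∑ k : Fin n, (if k.succ = k0.succ then 0 else
          if τ k.succ < τ k.castSucc then 1 else 0))
        = if τ k0.succ < τ k0.castSucc then X ^ d else X ^ (d + 1) := by
    intro k0
    have he : ∀ k : Fin n, (k.succ = k0.succ) = (k = k0) := by
      intro k; simp [Fin.succ_inj]
    simp only [he]
    have hsplit : d = (if τ k0.succ < τ k0.castSucc then 1 else 0)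
        + ∑ k ∈ Finset.univ.erase k0, (if τ k.succ < τ k.castSucc then 1 else 0) := by
      rw [hd, descents_card_filter, ← Finset.add_sum_erase _ _ (Finset.mem_univ k0)]
    have hrw : ∑ k : Fin n, (if k = k0 then 0 else
        if τ k.succ < τ k.castSucc then 1 else 0)
        = ∑ k ∈ Finset.univ.erase k0, (if τ k.succ < τ k.castSucc then 1 else 0) := by
      rw [← Finset.add_sum_erase _ (fun k => if k = k0 then 0 else
        if τ k.succ < τ k.castSucc then 1 else 0) (Finset.mem_univ k0), if_pos rfl, zero_add]
      exact Finset.sum_congr rfl fun k hk => by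
        rw [if_neg (Finset.ne_of_mem_erase hk)]
    rw [hrw]
    by_cases h : τ k0.succ < τ k0.castSucc
    · rw [if_pos h]
      rw [if_pos h] at hsplit
      congr 1
      omega
    · rw [if_neg h]
      rw [if_neg h] at hsplit
      congr 1
      omega
  rw [Finset.sum_congr rfl fun k0 _ => hsum k0]
  rw [Finset.sum_ite, Finset.sum_const, Finset.sum_const]
  have hc1 : (Finset.univ.filter fun k : Fin n => τ k.succ < τ k.castSucc).card = d := rfl
  have hc2 : (Finset.univ.filter fun k : Fin n => ¬ τ k.succ < τ k.castSucc).card = n - d := by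
    have := Finset.card_filter_add_card_filter_not (s := (Finset.univ : Finset (Fin n)))
      (fun k : Fin n => τ k.succ < τ k.castSucc)
    simp only [Finset.card_univ, Fintype.card_fin] at this
    omega
  rw [hc1, hc2]
  have hdn : d ≤ n := descents_le n τ
  have e1 : 1 + d = d + 1 := by omega
  have e2 : n + 1 - d = (n - d) + 1 := by omega
  rw [e1, e2, succ_nsmul, succ_nsmul]
  abel

lemma X_mul_derivative_X_pow (d : ℕ) :
    (X : Polynomial ℝ) * derivative ((X : Polynomial ℝ) ^ d)
      = C (d : ℝ) * X ^ d := by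
  cases d with
  | zero => simp
  | succ e =>
    rw [Polynomial.derivative_X_pow]
    have : e + 1 - 1 = e := by omega
    rw [this, pow_succ]
    push_cast
    ring

lemma eulerianPoly_succ (n : ℕ) :
    eulerianPoly (n+1) = (1 + C ((n : ℝ) + 1) * X) * eulerianPoly n
      + X * (1 - X) * derivative (eulerianPoly n) := by
  classical
  have hb := Fintype.sum_bijective _ (ins_bijective (n := n))
    (fun p : Fin (n+2) × Equiv.Perm (Fin (n+1)) => (X : Polynomial ℝ) ^ descents (n+1) (ins p.1 p.2))
    (fun σ => (X : Polynomial ℝ) ^ descents (n+1) σ) (fun p => rfl)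
  rw [eulerianPoly, ← hb, Fintype.sum_prod_type_right]
  rw [Finset.sum_congr rfl fun τ _ => sum_ins τ]
  rw [eulerianPoly, Finset.mul_sum, derivative_sum, Finset.mul_sum, ← Finset.sum_add_distrib]
  refine Finset.sum_congr rfl fun τ _ => ?_
  set d := descents n τ with hd
  have hdn : d ≤ n := descents_le n τ
  rw [mul_assoc, mul_left_comm X (1 - X) (derivative ((X : Polynomial ℝ) ^ d)),
    X_mul_derivative_X_pow]
  rw [nsmul_eq_mul, nsmul_eq_mul]
  push_cast [Nat.cast_sub (by omega : d ≤ n + 1)]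
  simp only [map_add, map_one, map_natCast]
  rw [pow_succ]
  ring

open Filter Set

noncomputable def hfun (n : ℕ) : ℝ → ℝ :=
  fun s => s * (eulerianPoly n).eval s / (1 - s)^(n+2)

lemma hasDerivAt_hfun (n : ℕ) {t : ℝ} (ht : t ≠ 1) :
    HasDerivAt (hfun n) ((eulerianPoly (n+1)).eval t / (1 - t)^(n+3)) t := by
  have h1t : (1 : ℝ) - t ≠ 0 := sub_ne_zero.2 (Ne.symm ht)
  have hu : HasDerivAt (fun s : ℝ => s * (eulerianPoly n).eval s)
      (1 * (eulerianPoly n).eval t + t * (derivative (eulerianPoly n)).eval t) t :=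
    (hasDerivAt_id t).mul ((eulerianPoly n).hasDerivAt t)
  have hv : HasDerivAt (fun s : ℝ => (1 - s)^(n+2))
      ((n+2 : ℕ) * (1 - t)^(n+1) * (-1)) t := by
    have hbase : HasDerivAt (fun s : ℝ => 1 - s) (-1) t := by
      simpa using ((hasDerivAt_id' t).const_sub (1:ℝ))
    have := hbase.pow (n+2)
    simpa [Pi.pow_def] using this
  have hdiv := hu.fun_div hv (pow_ne_zero _ h1t)
  refine hdiv.congr_deriv ?_
  symm
  rw [eulerianPoly_succ]
  simp only [eval_add, eval_mul, eval_one, eval_X, eval_sub, eval_natCast, eval_C]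
  field_simp
  push_cast
  ring

lemma tendsto_hfun (n : ℕ) : Tendsto (hfun n) atBot (nhds 0) := by
  set N : Polynomial ℝ := X * eulerianPoly n with hN
  set D : Polynomial ℝ := (1 - X)^(n+2) with hD
  have hND : ∀ s : ℝ, hfun n s = N.eval s / D.eval s := by
    intro s; simp [hfun, hN, hD]
  have hD' : D.comp (-X) = (1 + X)^(n+2) := by
    rw [hD, pow_comp, sub_comp, one_comp, X_comp]
    ring_nf
  have hdegN : (N.comp (-X)).natDegree ≤ n + 1 := by
    rw [natDegree_comp]
    have : (-X : Polynomial ℝ).natDegree = 1 := by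
      rw [natDegree_neg, natDegree_X]
    rw [this, mul_one, hN, natDegree_mul X_ne_zero (eulerianPoly_ne_zero n),
      natDegree_X, eulerianPoly_natDegree]
    omega
  have hdeg : (N.comp (-X)).degree < (D.comp (-X)).degree := by
    rw [hD']
    have h2 : ((1 + X : Polynomial ℝ)^(n+2)).natDegree = n + 2 := by
      rw [natDegree_pow]
      have : (1 + X : Polynomial ℝ).natDegree = 1 := by
        rw [add_comm]; exact natDegree_X_add_C 1
      rw [this, mul_one]
    have hne : ((1 + X : Polynomial ℝ)^(n+2)) ≠ 0 := by
      have h1 : (1 + X : Polynomial ℝ) = X + C 1 := by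
        rw [map_one]; ring
      rw [h1]
      exact pow_ne_zero _ (X_add_C_ne_zero 1)
    calc (N.comp (-X)).degree ≤ ((N.comp (-X)).natDegree : WithBot ℕ) := degree_le_natDegree
    _ ≤ ((n+1 : ℕ) : WithBot ℕ) := by exact_mod_cast hdegN
    _ < ((n+2 : ℕ) : WithBot ℕ) := by exact_mod_cast (by omega : n+1 < n+2)
    _ = ((1 + X : Polynomial ℝ)^(n+2)).degree := by
      rw [degree_eq_natDegree hne, h2]
  have hg := Polynomial.div_tendsto_zero_of_degree_lt (N.comp (-X)) (D.comp (-X)) hdeg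
  have hcomp : Tendsto (fun s : ℝ => -s) atBot atTop := tendsto_neg_atBot_atTop
  have := hg.comp hcomp
  apply this.congr
  intro s
  simp only [Function.comp_apply, eval_comp, eval_neg, eval_X, neg_neg]
  rw [hND]

def Good (n : ℕ) : Prop :=
  Multiset.card (eulerianPoly n).roots = n ∧ (eulerianPoly n).roots.Nodup ∧
    ∀ x ∈ (eulerianPoly n).roots, x < (0:ℝ)

lemma good_step (n : ℕ) (hg : Good n) : Good (n+1) := by
  classical
  obtain ⟨hcard, hnodup, hneg⟩ := hg
  set p := eulerianPoly n with hp
  set q := eulerianPoly (n+1) with hq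
  set L : List ℝ := p.roots.sort (· ≤ ·) with hL
  have hLlen : L.length = n := by rw [hL, Multiset.length_sort, hcard]
  have hLsorted : L.Pairwise (· ≤ ·) := Multiset.pairwise_sort _ _
  have hLcoe : (L : Multiset ℝ) = p.roots := Multiset.sort_eq _ _
  have hLnodup : L.Nodup := by
    have := hnodup; rw [← hLcoe] at this; exact this
  have hLlt : L.Pairwise (· < ·) := (hLsorted.and hLnodup).imp (fun h => lt_of_le_of_ne h.1 h.2)
  have hLmem : ∀ x, x ∈ L ↔ x ∈ p.roots := fun x => Multiset.mem_sort _
  set f : Fin n → ℝ := fun i => L.get (Fin.cast hLlen.symm i) with hf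
  have hfmono : StrictMono f := by
    intro i j hij
    apply hLlt.sortedLT.strictMono_get
    rw [Fin.lt_def] at hij ⊢
    simpa only [Fin.coe_cast] using hij
  have hfroot : ∀ i, f i ∈ p.roots := fun i => (hLmem _).1 (List.get_mem L _)
  have hfneg : ∀ i, f i < 0 := fun i => hneg _ (hfroot i)
  set w : Fin (n+1) → ℝ := Fin.snoc f 0 with hw
  have hw_cast : ∀ i : Fin n, w i.castSucc = f i := fun i => Fin.snoc_castSucc _ _ _
  have hw_last : w (Fin.last n) = 0 := Fin.snoc_last _ _
  have hwmono : StrictMono w := by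
    rw [Fin.strictMono_iff_lt_succ]
    intro i
    rcases Fin.eq_castSucc_or_eq_last i.succ with ⟨j, hj⟩ | hj
    · rw [hj, hw_cast, hw_cast]
      apply hfmono
      have hv := congrArg Fin.val hj
      simp only [Fin.val_succ, Fin.coe_castSucc] at hv
      rw [Fin.lt_def]
      omega
    · rw [hj, hw_last, hw_cast]; exact hfneg i
  have hwnonpos : ∀ i, w i ≤ 0 := by
    intro i
    rcases Fin.eq_castSucc_or_eq_last i with ⟨j, hj⟩ | hj
    · rw [hj, hw_cast]; exact (hfneg j).le
    · rw [hj, hw_last]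
  have hzero : ∀ i : Fin (n+1), hfun n (w i) = 0 := by
    intro i
    rcases Fin.eq_castSucc_or_eq_last i with ⟨j, hj⟩ | hj
    · rw [hj, hw_cast]
      have hre : p.eval (f j) = 0 := (Polynomial.mem_roots'.1 (hfroot j)).2
      simp [hfun, ← hp, hre]
    · rw [hj, hw_last]; simp [hfun]
  have hcont : ∀ s : Set ℝ, (∀ t ∈ s, t ≤ 0) → ContinuousOn (hfun n) s := by
    intro s hs
    apply ContinuousOn.div
    · exact (continuous_id.mul (Polynomial.continuous p)).continuousOn
    · exact (Continuous.pow (continuous_const.sub continuous_id) _).continuousOn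
    · intro t ht
      have h1 := hs t ht
      have : (1 : ℝ) - t ≠ 0 := by intro h; linarith
      exact pow_ne_zero _ this
  have hroot_exists : ∀ i : Fin n, ∃ c,
      c ∈ Set.Ioo (w i.castSucc) (w i.succ) ∧ q.eval c = 0 := by
    intro i
    have hlt : w i.castSucc < w i.succ := hwmono (Fin.castSucc_lt_succ (i := i))
    have hcc : ContinuousOn (hfun n) (Set.Icc (w i.castSucc) (w i.succ)) :=
      hcont _ (fun t ht => le_trans ht.2 (hwnonpos _))
    obtain ⟨c, hcI, hc⟩ := exists_deriv_eq_zero hlt hcc ((hzero _).trans (hzero _).symm)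
    refine ⟨c, hcI, ?_⟩
    have hcn : c < 0 := lt_of_lt_of_le hcI.2 (hwnonpos _)
    have hc1 : c ≠ 1 := by intro h; rw [h] at hcn; linarith
    have hd := hasDerivAt_hfun n hc1
    rw [hd.deriv] at hc
    have h1c : ((1:ℝ) - c)^(n+3) ≠ 0 := pow_ne_zero _ (sub_ne_zero.2 (Ne.symm hc1))
    rw [_root_.div_eq_zero_iff] at hc
    rcases hc with hc | hc
    · exact hc
    · exact absurd hc h1c
  choose c hcI hcroot using hroot_exists
  -- far-left root
  set a := w 0 with ha
  have ha0 : a ≤ 0 := hwnonpos 0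
  have hminroot : ∀ x ∈ p.roots, a ≤ x := by
    intro x hx
    have hxL : x ∈ L := (hLmem x).2 hx
    obtain ⟨k, hk⟩ := List.mem_iff_get.1 hxL
    have : f (Fin.cast hLlen k) = x := by
      rw [hf]; simpa using hk
    rw [← this, ← hw_cast]
    exact hwmono.monotone (Fin.zero_le _)
  set c0 := a - 1 with hc0def
  have hc0lt : c0 < a := by rw [hc0def]; linarith
  have hc0neg : c0 < 0 := lt_of_lt_of_le hc0lt ha0
  have hpc0 : p.eval c0 ≠ 0 := by
    intro h
    have hmem : c0 ∈ p.roots := Polynomial.mem_roots'.2 ⟨eulerianPoly_ne_zero n, h⟩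
    exact absurd (hminroot _ hmem) (not_le.2 hc0lt)
  have hhc0 : hfun n c0 ≠ 0 := by
    apply div_ne_zero (mul_ne_zero (ne_of_lt hc0neg) hpc0)
    refine pow_ne_zero _ ?_
    intro h; rw [sub_eq_zero] at h; rw [← h] at hc0neg; linarith
  have hev : ∀ᶠ t in Filter.atBot, |hfun n t| < |hfun n c0| := by
    have habs : Filter.Tendsto (fun t => |hfun n t|) Filter.atBot (nhds 0) := by
      simpa using (tendsto_hfun n).abs
    exact habs.eventually_lt_const (abs_pos.2 hhc0)
  obtain ⟨M, hM1, hM2⟩ := ((hev.and (Filter.eventually_lt_atBot c0)).exists)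
  have hMc0 : M < c0 := hM2
  have hMa : M < a := lt_trans hM2 hc0lt
  have hccIcc : ContinuousOn (hfun n) (Set.Icc M a) :=
    hcont _ (fun t ht => le_trans ht.2 ha0)
  have hc0mem : c0 ∈ Set.Icc M a := ⟨hM2.le, hc0lt.le⟩
  have h_a_zero : hfun n a = 0 := hzero 0
  have key : ∃ x, x ∈ Set.Ioo M a ∧ q.eval x = 0 := by
    have habs1 : -(|hfun n c0|) < hfun n M :=
      lt_of_lt_of_le (neg_lt_neg hM1) (neg_abs_le _)
    have habs2 : hfun n M < |hfun n c0| := lt_of_le_of_lt (le_abs_self _) hM1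
    rcases lt_or_gt_of_ne hhc0 with hlt | hgt
    · obtain ⟨x, hxI, hmin⟩ := (isCompact_Icc).exists_isMinOn
        (Set.nonempty_Icc.2 (le_of_lt hMa)) hccIcc
      have hx1 : hfun n x ≤ hfun n c0 := hmin hc0mem
      have habs : |hfun n c0| = -(hfun n c0) := abs_of_neg hlt
      have hxM : x ≠ M := by
        intro h; rw [h] at hx1; rw [habs] at habs1; linarith
      have hxa : x ≠ a := by
        intro h; rw [h, h_a_zero] at hx1; linarith
      have hxIoo : x ∈ Set.Ioo M a :=
        ⟨lt_of_le_of_ne hxI.1 (Ne.symm hxM), lt_of_le_of_ne hxI.2 hxa⟩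
      have hloc : IsLocalMin (hfun n) x := hmin.isLocalMin (Icc_mem_nhds hxIoo.1 hxIoo.2)
      have hx0 : x < 0 := lt_of_lt_of_le hxIoo.2 ha0
      have hx1ne : x ≠ 1 := by intro h; rw [h] at hx0; linarith
      have hder := hloc.hasDerivAt_eq_zero (hasDerivAt_hfun n hx1ne)
      refine ⟨x, hxIoo, ?_⟩
      rw [_root_.div_eq_zero_iff] at hder
      rcases hder with hder | hder
      · exact hder
      · exact absurd hder (pow_ne_zero _ (sub_ne_zero.2 (Ne.symm hx1ne)))
    · obtain ⟨x, hxI, hmax⟩ := (isCompact_Icc).exists_isMaxOn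
        (Set.nonempty_Icc.2 (le_of_lt hMa)) hccIcc
      have hx1 : hfun n c0 ≤ hfun n x := hmax hc0mem
      have habs : |hfun n c0| = hfun n c0 := abs_of_pos hgt
      have hxM : x ≠ M := by
        intro h; rw [h] at hx1; rw [habs] at habs2; linarith
      have hxa : x ≠ a := by
        intro h; rw [h, h_a_zero] at hx1; linarith
      have hxIoo : x ∈ Set.Ioo M a :=
        ⟨lt_of_le_of_ne hxI.1 (Ne.symm hxM), lt_of_le_of_ne hxI.2 hxa⟩
      have hloc : IsLocalMax (hfun n) x := hmax.isLocalMax (Icc_mem_nhds hxIoo.1 hxIoo.2)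
      have hx0 : x < 0 := lt_of_lt_of_le hxIoo.2 ha0
      have hx1ne : x ≠ 1 := by intro h; rw [h] at hx0; linarith
      have hder := hloc.hasDerivAt_eq_zero (hasDerivAt_hfun n hx1ne)
      refine ⟨x, hxIoo, ?_⟩
      rw [_root_.div_eq_zero_iff] at hder
      rcases hder with hder | hder
      · exact hder
      · exact absurd hder (pow_ne_zero _ (sub_ne_zero.2 (Ne.symm hx1ne)))
  obtain ⟨x0, hx0I, hx0root⟩ := key
  set y : Fin (n+1) → ℝ := Fin.cons x0 c with hy
  have hy0 : y 0 = x0 := rfl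
  have hysucc : ∀ i : Fin n, y i.succ = c i := fun i => Fin.cons_succ _ _ _
  have hyroot : ∀ i, q.eval (y i) = 0 := by
    intro i
    rcases Fin.eq_zero_or_eq_succ i with h0 | ⟨j, hj⟩
    · rw [h0, hy0]; exact hx0root
    · rw [hj, hysucc]; exact hcroot j
  have hyneg : ∀ i, y i < 0 := by
    intro i
    rcases Fin.eq_zero_or_eq_succ i with h0 | ⟨j, hj⟩
    · rw [h0, hy0]; exact lt_of_lt_of_le hx0I.2 ha0
    · rw [hj, hysucc]; exact lt_of_lt_of_le (hcI j).2 (hwnonpos _)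
  have hymono : StrictMono y := by
    rw [Fin.strictMono_iff_lt_succ]
    intro i
    rw [hysucc]
    rcases Fin.eq_zero_or_eq_succ i.castSucc with h0 | ⟨j, hj⟩
    · rw [h0, hy0]
      have h1 : a ≤ w i.castSucc := hwmono.monotone (Fin.zero_le _)
      exact lt_of_lt_of_le hx0I.2 (le_trans h1 (le_of_lt (hcI i).1))
    · rw [hj, hysucc]
      have h1 : c j < w j.succ := (hcI j).2
      have h2 : w j.succ = w i.castSucc := by rw [hj]
      exact lt_trans (h2 ▸ h1) (hcI i).1
  have hqne : q ≠ 0 := eulerianPoly_ne_zero (n+1)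
  set S : Finset ℝ := Finset.image y Finset.univ with hS
  have hScard : S.card = n+1 := by
    rw [hS, Finset.card_image_of_injective _ hymono.injective, Finset.card_univ,
      Fintype.card_fin]
  have hSle : S.val ≤ q.roots := by
    rw [Multiset.le_iff_count]
    intro x
    by_cases hx : x ∈ S
    · rw [Multiset.count_eq_one_of_mem S.nodup hx]
      rw [Multiset.one_le_count_iff_mem]
      obtain ⟨i, _, hi⟩ := Finset.mem_image.1 hx
      rw [← hi]
      exact Polynomial.mem_roots'.2 ⟨hqne, hyroot i⟩
    · rw [Multiset.count_eq_zero_of_notMem (by simpa using hx)]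
      exact Nat.zero_le _
  have hcards : Multiset.card q.roots ≤ n + 1 := by
    have := Polynomial.card_roots' q
    rwa [hq, eulerianPoly_natDegree] at this
  have hroots_eq : q.roots = S.val := by
    symm
    refine Multiset.eq_of_le_of_card_le hSle ?_
    have : Multiset.card S.val = n + 1 := hScard
    omega
  refine ⟨?_, ?_, ?_⟩
  · rw [hroots_eq]; exact hScard
  · rw [hroots_eq]; exact S.nodup
  · intro x hx
    rw [hroots_eq] at hx
    obtain ⟨i, _, hi⟩ := Finset.mem_image.1 (show x ∈ S from hx)
    rw [← hi]; exact hyneg i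


lemma eulerianPoly_zero : eulerianPoly 0 = 1 := by
  classical
  have hd : ∀ σ : Equiv.Perm (Fin 1), descents 0 σ = 0 := by
    intro σ; simp [descents]
  rw [eulerianPoly]
  rw [Finset.sum_congr rfl fun σ _ => by rw [hd σ, pow_zero]]
  simp [Fintype.card_perm]

lemma good_all (n : ℕ) : Good n := by
  induction n with
  | zero =>
    unfold Good
    rw [eulerianPoly_zero, Polynomial.roots_one]
    exact ⟨rfl, Multiset.nodup_zero, by simp⟩
  | succ m ih => exact good_step m ih

theorem stmt0 (n : ℕ) (hn : 1 ≤ n) :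
    (∀ k ≤ n, eulerianNumber n k = eulerianNumber n (n - k)) ∧
    Polynomial.Splits (eulerianPoly n) ∧
    ∀ r ∈ (eulerianPoly n).roots, r < 0 := by
  obtain ⟨hcard, hnodup, hneg⟩ := good_all n
  refine ⟨fun k hk => eulerianNumber_symm n k hk, ?_, hneg⟩
  rw [Polynomial.splits_iff_card_roots, eulerianPoly_natDegree, hcard]
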